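/- For any symmetric positive definite matrices Σ̂ and Σ₀ of the same size, tr(Σ̂⁻¹ Σ₀ Σ̂⁻¹) ≥ tr(Σ̂⁻¹)² / tr(Σ₀⁻¹). -/

import Mathlib

open Matrix
open scoped MatrixOrder

lemma trace_pos_of_posDef {d : ℕ} {M : Matrix (Fin d) (Fin d) ℝ} (hM : M.PosDef)
    (hd : 0 < d) : 0 < M.trace := by
  have h : ∀ i, 0 < M i i := by
    intro i
    exact hM.diag_pos
  rw [Matrix.trace]
  exact Finset.sum_pos (fun i _ => h i) (by simpa [Finset.univ_nonempty_iff] using Fin.pos_iff_nonempty.mp hd)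

theorem trace_inv_quadratic_bound {d : ℕ} (Shat S0 : Matrix (Fin d) (Fin d) ℝ)
    (h1 : Shat.PosDef) (h1s : Shat.IsSymm) (h2 : S0.PosDef) (h2s : S0.IsSymm) :
    (Shat⁻¹ * S0 * Shat⁻¹).trace ≥ ((Shat⁻¹).trace) ^ 2 / (S0⁻¹).trace := by
  rcases Nat.eq_zero_or_pos d with hd | hd
  · subst hd
    simp [Matrix.trace]
  set A := Shat⁻¹ with hA
  have hApd : A.PosDef := h1.inv
  have hAs : Aᵀ = A := by
    rw [hA, Matrix.transpose_nonsing_inv, h1s]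
  have hS0psd := h2.posSemidef
  set C := CFC.sqrt S0 with hC
  have hCpsd : C.PosSemidef := (CFC.sqrt_nonneg S0).posSemidef
  have hCs : Cᵀ = C := by
    have := hCpsd.1
    rwa [Matrix.IsHermitian, Matrix.conjTranspose_eq_transpose_of_trivial] at this
  have hCC : C * C = S0 := CFC.sqrt_mul_sqrt_self S0 hS0psd.nonneg
  have hCdet : IsUnit C.det := by
    have : C.det * C.det = S0.det := by rw [← Matrix.det_mul, hCC]
    have h2d : S0.det ≠ 0 := h2.det_pos.ne'
    exact isUnit_iff_ne_zero.mpr (fun h => h2d (by rw [← this, h, zero_mul]))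
  have hCinv : C⁻¹ * C = 1 := Matrix.nonsing_inv_mul C hCdet
  have hCinvs : (C⁻¹)ᵀ = C⁻¹ := by rw [Matrix.transpose_nonsing_inv, hCs]
  -- trace A as a sum
  have htrA : A.trace = ∑ p : Fin d × Fin d, (C * A) p.1 p.2 * C⁻¹ p.2 p.1 := by
    have : A.trace = (C⁻¹ * (C * A)).trace := by
      rw [← Matrix.mul_assoc, hCinv, Matrix.one_mul]
    rw [this, Matrix.trace, Fintype.sum_prod_type]
    simp only [Matrix.diag_apply, Matrix.mul_apply]
    rw [Finset.sum_comm]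
    congr 1; ext i; congr 1; ext j; ring
  have hS2 : (A * S0 * A).trace = ∑ p : Fin d × Fin d, ((C * A) p.1 p.2) ^ 2 := by
    have h1' : A * S0 * A = (C * A)ᵀ * (C * A) := by
      rw [Matrix.transpose_mul, hAs, hCs, ← hCC]
      noncomm_ring
    rw [h1', Matrix.trace, Fintype.sum_prod_type]
    simp only [Matrix.diag_apply, Matrix.mul_apply, Matrix.transpose_apply]
    rw [Finset.sum_comm]
    congr 1; ext i; congr 1; ext j; ring
  have hS3 : (S0⁻¹).trace = ∑ p : Fin d × Fin d, (C⁻¹ p.2 p.1) ^ 2 := by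
    have h1' : S0⁻¹ = C⁻¹ * C⁻¹ := by rw [← hCC, Matrix.mul_inv_rev]
    rw [h1', Matrix.trace, Fintype.sum_prod_type]
    simp only [Matrix.diag_apply, Matrix.mul_apply]
    rw [Finset.sum_comm]
    congr 1; ext i; congr 1; ext j
    rw [sq]
    nth_rewrite 2 [← hCinvs]
    simp [Matrix.transpose_apply, mul_comm]
  have hCS := Finset.sum_mul_sq_le_sq_mul_sq Finset.univ
    (fun p : Fin d × Fin d => (C * A) p.1 p.2) (fun p => C⁻¹ p.2 p.1)
  rw [← htrA, ← hS2, ← hS3] at hCS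
  have hpos : 0 < (S0⁻¹).trace := trace_pos_of_posDef h2.inv hd
  rw [ge_iff_le, div_le_iff₀ hpos]
  exact hCS
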